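/- Let A be a Dedekind domain, 𝔪 a maximal ideal, and n ≥ i ≥ 1 integers. Then A/𝔪^i is isomorphic to the kernel of an A-module endomorphism of A/𝔪ⁿ. Consequently, any replete reflective subcategory of the category of finitely generated A-modules containing A/𝔪ⁿ also contains A/𝔪^i. -/

import Mathlib

open CategoryTheory

section AuxAlgebra

variable {A : Type} [CommRing A] [IsDedekindDomain A]

/-- In a Dedekind domain, if `x ∈ 𝔪^k \ 𝔪^(k+1)` then `(𝔪^n : x) = 𝔪^(n-k)` for `k ≤ n`. -/
lemma colon_pow_aux {𝔪 : Ideal A} (hm : 𝔪.IsMaximal) (hbot : 𝔪 ≠ ⊥)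
    {x : A} {k n : ℕ} (hkn : k ≤ n) (hx : x ∈ 𝔪 ^ k) (hx' : x ∉ 𝔪 ^ (k + 1)) :
    (𝔪 ^ n).colon (Ideal.span {x}) = 𝔪 ^ (n - k) := by
  haveI : 𝔪.IsPrime := hm.isPrime
  have hp : Prime (𝔪 : Ideal A) := Ideal.prime_of_isPrime hbot hm.isPrime
  have hdvd : 𝔪 ^ k ∣ Ideal.span {x} := Ideal.dvd_span_singleton.mpr hx
  obtain ⟨C, hC⟩ := hdvd
  have hCnd : ¬ 𝔪 ∣ C := by
    intro ⟨D, hD⟩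
    apply hx'
    rw [← Ideal.dvd_span_singleton, hC, hD, pow_succ]
    exact ⟨D, by ring⟩
  ext z
  rw [Ideal.mem_colon_span_singleton]
  constructor
  · intro hz
    have h1 : 𝔪 ^ n ∣ Ideal.span {z} * Ideal.span {x} := by
      rw [Ideal.span_singleton_mul_span_singleton]
      exact Ideal.dvd_span_singleton.mpr hz
    rw [hC, ← mul_assoc] at h1
    have h2 : 𝔪 ^ n ∣ Ideal.span {z} * 𝔪 ^ k :=
      hp.pow_dvd_of_dvd_mul_right _ hCnd h1
    have h3 : 𝔪 ^ (n - k) * 𝔪 ^ k ∣ Ideal.span {z} * 𝔪 ^ k := by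
      rwa [← pow_add, Nat.sub_add_cancel hkn]
    have hk0 : (𝔪 : Ideal A) ^ k ≠ 0 := pow_ne_zero _ (by rwa [Ideal.zero_eq_bot])
    have h4 : 𝔪 ^ (n - k) ∣ Ideal.span {z} :=
      (mul_dvd_mul_iff_right hk0).mp h3
    exact Ideal.dvd_span_singleton.mp h4
  · intro hz
    have : z * x ∈ 𝔪 ^ (n - k) * 𝔪 ^ k := Ideal.mul_mem_mul hz hx
    rwa [← pow_add, Nat.sub_add_cancel hkn] at this

/-- In a Dedekind domain, if `x ∈ 𝔪^k \ 𝔪^(k+1)` then `(x) + 𝔪^n = 𝔪^k` for `k ≤ n`. -/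
lemma span_sup_pow_aux {𝔪 : Ideal A} (hm : 𝔪.IsMaximal) (hbot : 𝔪 ≠ ⊥)
    {x : A} {k n : ℕ} (hkn : k ≤ n) (hx : x ∈ 𝔪 ^ k) (hx' : x ∉ 𝔪 ^ (k + 1)) :
    Ideal.span {x} ⊔ 𝔪 ^ n = 𝔪 ^ k := by
  haveI : 𝔪.IsPrime := hm.isPrime
  have hp : Prime (𝔪 : Ideal A) := Ideal.prime_of_isPrime hbot hm.isPrime
  set S := Ideal.span {x} ⊔ 𝔪 ^ n with hS
  have hdvd : S ∣ 𝔪 ^ n := Ideal.dvd_iff_le.mpr le_sup_right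
  obtain ⟨j, hjn, hassoc⟩ := (dvd_prime_pow hp n).mp hdvd
  have hSj : S = 𝔪 ^ j := associated_iff_eq.mp hassoc
  have hxS : x ∈ S := Ideal.mem_sup_left (Ideal.mem_span_singleton_self x)
  have hjk : j ≤ k := by
    by_contra h
    push_neg at h
    exact hx' (Ideal.pow_le_pow_right h (hSj ▸ hxS))
  have hSk : S ≤ 𝔪 ^ k :=
    sup_le ((Ideal.span_singleton_le_iff_mem _).mpr hx) (Ideal.pow_le_pow_right hkn)
  exact le_antisymm hSk (hSj ▸ Ideal.pow_le_pow_right hjk)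

/-- The main algebraic content: `A ⧸ 𝔪^i` is the kernel of an endomorphism of `A ⧸ 𝔪^n`. -/
lemma exists_kernel_aux (𝔪 : Ideal A) (hm : 𝔪.IsMaximal) (i n : ℕ) (hi : 1 ≤ i) (hin : i ≤ n) :
    ∃ φ : (A ⧸ (𝔪 ^ n)) →ₗ[A] (A ⧸ (𝔪 ^ n)),
      Nonempty ((A ⧸ (𝔪 ^ i)) ≃ₗ[A] LinearMap.ker φ) := by
  by_cases hbot : 𝔪 = ⊥
  · -- degenerate case: `𝔪 = ⊥`, so `𝔪^i = 𝔪^n = ⊥`.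
    have h1 : (𝔪 : Ideal A) ^ i = 𝔪 ^ n := by
      subst hbot
      rw [← Ideal.zero_eq_bot, zero_pow (by omega : i ≠ 0), zero_pow (by omega : n ≠ 0)]
    refine ⟨0, ⟨?_⟩⟩
    exact (Submodule.quotEquivOfEq _ _ h1).trans
      ((Submodule.topEquiv.symm).trans (LinearEquiv.ofEq _ _ (LinearMap.ker_zero).symm))
  · obtain ⟨x, hx, hx'⟩ := Ideal.exists_mem_pow_notMem_pow_succ 𝔪 hbot hm.ne_top i
    obtain ⟨y, hy, hy'⟩ := Ideal.exists_mem_pow_notMem_pow_succ 𝔪 hbot hm.ne_top (n - i)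
    -- φ is multiplication by x on A ⧸ 𝔪^n
    set φ : (A ⧸ (𝔪 ^ n)) →ₗ[A] (A ⧸ (𝔪 ^ n)) :=
      LinearMap.mulLeft A (Ideal.Quotient.mk (𝔪 ^ n) x) with hφ
    -- ψ : A → A ⧸ 𝔪^n is a ↦ y * a mod 𝔪^n
    set ψ : A →ₗ[A] (A ⧸ (𝔪 ^ n)) :=
      (LinearMap.mulLeft A (Ideal.Quotient.mk (𝔪 ^ n) y)).comp
        (Ideal.Quotient.mkₐ A (𝔪 ^ n)).toLinearMap with hψ
    have hψa : ∀ a : A, ψ a = Ideal.Quotient.mk (𝔪 ^ n) (y * a) := by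
      intro a
      simp [hψ, LinearMap.mulLeft_apply, ← map_mul]
    have hxy : x * y ∈ 𝔪 ^ n := by
      have : x * y ∈ 𝔪 ^ i * 𝔪 ^ (n - i) := Ideal.mul_mem_mul hx hy
      rwa [← pow_add, Nat.add_sub_cancel' hin] at this
    -- kernel of ψ is 𝔪^i
    have hkerψ : LinearMap.ker ψ = 𝔪 ^ i := by
      ext a
      rw [LinearMap.mem_ker, hψa, Ideal.Quotient.eq_zero_iff_mem]
      have hcolon := colon_pow_aux hm hbot (Nat.sub_le n i) hy hy'
      rw [Nat.sub_sub_self hin] at hcolon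
      rw [← hcolon, Ideal.mem_colon_span_singleton, mul_comm]
    -- range of ψ is ker φ
    have hrangeψ : LinearMap.range ψ = LinearMap.ker φ := by
      apply le_antisymm
      · rintro _ ⟨a, rfl⟩
        rw [LinearMap.mem_ker, hψa, hφ, LinearMap.mulLeft_apply, ← map_mul,
          Ideal.Quotient.eq_zero_iff_mem]
        have : x * (y * a) = (x * y) * a := by ring
        rw [this]
        exact Ideal.mul_mem_right a _ hxy
      · rintro z hz
        obtain ⟨z, rfl⟩ := Ideal.Quotient.mk_surjective z
        rw [LinearMap.mem_ker, hφ, LinearMap.mulLeft_apply, ← map_mul,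
          Ideal.Quotient.eq_zero_iff_mem] at hz
        have hzmem : z ∈ Ideal.span {y} ⊔ 𝔪 ^ n := by
          rw [span_sup_pow_aux hm hbot (Nat.sub_le n i) hy hy']
          have hcolon := colon_pow_aux hm hbot hin hx hx'
          rw [← hcolon, Ideal.mem_colon_span_singleton, mul_comm]
          exact hz
        obtain ⟨s, hs, t, ht, rfl⟩ := Submodule.mem_sup.mp hzmem
        obtain ⟨a, rfl⟩ := Ideal.mem_span_singleton'.mp hs
        refine ⟨a, ?_⟩
        rw [hψa, map_add, Ideal.Quotient.eq_zero_iff_mem.mpr ht, add_zero, mul_comm]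
    exact ⟨φ, ⟨(Submodule.quotEquivOfEq _ _ hkerψ.symm).trans
      (ψ.quotKerEquivRange.trans (LinearEquiv.ofEq _ _ hrangeψ))⟩⟩

end AuxAlgebra

/-- For a Dedekind domain `A`, a maximal ideal `𝔪` and `1 ≤ i ≤ n`, the module `A ⧸ 𝔪^i` is the
kernel of an endomorphism of `A ⧸ 𝔪^n`; consequently any replete reflective subcategory of the
category of finitely generated `A`-modules containing `A ⧸ 𝔪^n` also contains `A ⧸ 𝔪^i`. -/
theorem quotient_power_kernel_and_reflective_subcategory
    (A : Type) [CommRing A] [IsDedekindDomain A]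
    (𝔪 : Ideal A) (hm : 𝔪.IsMaximal) (i n : ℕ) (hi : 1 ≤ i) (hin : i ≤ n)
    (P : FGModuleCat A → Prop)
    (hrep : ∀ {X Y : FGModuleCat A}, (X ≅ Y) → P X → P Y)
    [(ObjectProperty.ι P).IsRightAdjoint]
    (hPn : P (FGModuleCat.of A (A ⧸ (𝔪 ^ n)))) :
    (∃ φ : (A ⧸ (𝔪 ^ n)) →ₗ[A] (A ⧸ (𝔪 ^ n)),
        Nonempty ((A ⧸ (𝔪 ^ i)) ≃ₗ[A] LinearMap.ker φ)) ∧
      P (FGModuleCat.of A (A ⧸ (𝔪 ^ i))) := by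
  obtain ⟨φ, ⟨e⟩⟩ := exists_kernel_aux 𝔪 hm i n hi hin
  refine ⟨⟨φ, ⟨e⟩⟩, ?_⟩
  -- categorical part
  set X : FGModuleCat A := FGModuleCat.of A (A ⧸ (𝔪 ^ n)) with hX
  set Y : FGModuleCat A := FGModuleCat.of A (A ⧸ (𝔪 ^ i)) with hY
  let ι := ObjectProperty.ι P
  let adj := Adjunction.ofIsRightAdjoint ι
  let L := ι.leftAdjoint
  let X' : ObjectProperty.FullSubcategory P := ⟨X, hPn⟩
  -- the inclusion of Y into X as the kernel of φ
  let k : Y ⟶ X := FGModuleCat.ofHom ((LinearMap.ker φ).subtype.comp (e : (A ⧸ (𝔪 ^ i)) →ₗ[A] LinearMap.ker φ))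
  have hkinj : Function.Injective k :=
    (Submodule.injective_subtype _).comp e.injective
  let φm : X ⟶ X := FGModuleCat.ofHom φ
  have hkφ : k ≫ φm = 0 := by
    refine FGModuleCat.hom_ext (LinearMap.ext fun z => ?_)
    exact (e z).2
  let η : Y ⟶ ι.obj (L.obj Y) := adj.unit.app Y
  let k' : L.obj Y ⟶ X' := (adj.homEquiv Y X').symm k
  have hk : η ≫ ι.map k' = k := by
    have := (adj.homEquiv Y X').apply_symm_apply k
    rwa [Adjunction.homEquiv_unit] at this
  -- cancellation: maps out of ι (L Y) into objects of the subcategory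
  -- are determined by precomposition with η
  have cancel : ∀ (Z : ObjectProperty.FullSubcategory P) (g h : ι.obj (L.obj Y) ⟶ ι.obj Z),
      η ≫ g = η ≫ h → g = h := by
    intro Z g h hgh
    have h1 : (adj.homEquiv Y Z) (ObjectProperty.homMk g)
        = (adj.homEquiv Y Z) (ObjectProperty.homMk h) := by
      rw [Adjunction.homEquiv_unit, Adjunction.homEquiv_unit]
      exact hgh
    exact congrArg (fun f => f.hom) ((adj.homEquiv Y Z).injective h1)
  -- ι.map k' composed with φ is zero
  have hk'φ : ι.map k' ≫ φm = 0 := by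
    have : η ≫ (ι.map k' ≫ φm) = η ≫ (0 : ι.obj (L.obj Y) ⟶ ι.obj X') := by
      rw [← Category.assoc, hk, hkφ, Limits.comp_zero]
    exact cancel X' (ι.map k' ≫ φm) 0 this
  -- build the inverse map u
  have hk'mem : ∀ m : ι.obj (L.obj Y), φ ((ι.map k') m) = 0 := by
    intro m
    exact congrArg (fun f : ι.obj (L.obj Y) ⟶ X => ConcreteCategory.hom f m) hk'φ
  let u : ι.obj (L.obj Y) ⟶ Y :=
    FGModuleCat.ofHom ((e.symm : LinearMap.ker φ →ₗ[A] (A ⧸ (𝔪 ^ i))).comp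
      (LinearMap.codRestrict (LinearMap.ker φ) (ι.map k').hom.hom hk'mem))
  have hku : ∀ m : ι.obj (L.obj Y), k (u m) = (ι.map k') m := by
    intro m
    show (LinearMap.ker φ).subtype (e (e.symm _)) = _
    rw [e.apply_symm_apply]
    rfl
  have h1 : η ≫ u = 𝟙 Y := by
    refine FGModuleCat.hom_ext (LinearMap.ext fun z => ?_)
    apply hkinj
    show k (u (η z)) = k z
    rw [hku (η z)]
    exact congrArg (fun f : Y ⟶ X => ConcreteCategory.hom f z) hk
  have h2 : u ≫ η = 𝟙 (ι.obj (L.obj Y)) := by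
    apply cancel (L.obj Y)
    rw [← Category.assoc, h1, Category.id_comp, Category.comp_id]
  have hiso : Y ≅ ι.obj (L.obj Y) := ⟨η, u, h1, h2⟩
  exact hrep hiso.symm (L.obj Y).property
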